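/- The commutator of the symmetric and skew-symmetric Obata operators is given explicitly by (⁺O∘⁺Φ − ⁺Φ∘⁺O)^{im}_{pj} = ¼ (g_{sj} g^{ir} a_{pr} ǎ^{sm} − a_{sj} ǎ^{ir} g_{pr} g^{sm}). -/

import Mathlib

open Matrix

/-- Symmetric Obata operator `(±O X)^i_{jk} = ½(X^i_{jk} ± g_{sj} g^{ih} X^s_{hk})`. -/
noncomputable def ObataO {n : ℕ} (ε : ℝ) (g : Matrix (Fin n) (Fin n) ℝ)
    (X : Fin n → Fin n → Fin n → ℝ) : Fin n → Fin n → Fin n → ℝ :=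
  fun i j k => (1/2) * (X i j k + ε * ∑ s, ∑ h, g s j * g⁻¹ i h * X s h k)

/-- Skew Obata operator with `l = 0`: `(Φ^+ X)^i_{jk} = ½(X^i_{jk} + Σ_{s,r} a_{sj} ǎ^{ir} X^s_{rk})`. -/
noncomputable def PhiPlus {n : ℕ} (a ac : Matrix (Fin n) (Fin n) ℝ)
    (X : Fin n → Fin n → Fin n → ℝ) : Fin n → Fin n → Fin n → ℝ :=
  fun i j k => (1/2) * (X i j k + ∑ s, ∑ r, a s j * ac i r * X s r k)

private lemma quad_comm {n : ℕ} (f : Fin n → Fin n → Fin n → Fin n → ℝ) :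
    ∑ s, ∑ h, ∑ t, ∑ r, f s h t r = ∑ t, ∑ r, ∑ s, ∑ h, f s h t r := by
  have h1 : ∀ s : Fin n, (∑ h, ∑ t, ∑ r, f s h t r) = ∑ t, ∑ r, ∑ h, f s h t r := by
    intro s
    rw [Finset.sum_comm]
    exact Finset.sum_congr rfl fun t _ => Finset.sum_comm
  simp_rw [h1]
  rw [Finset.sum_comm]
  exact Finset.sum_congr rfl fun t _ => Finset.sum_comm

theorem obata_phi_commutator
    {n : ℕ} (g a ac : Matrix (Fin n) (Fin n) ℝ)
    (hg : g.IsSymm) (hginv : IsUnit g.det) (ha : aᵀ = -a)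
    (X : Fin n → Fin n → Fin n → ℝ) :
    ObataO 1 g (PhiPlus a ac X) - PhiPlus a ac (ObataO 1 g X) =
      fun i j k => ∑ p, ∑ m,
        ((1/4) * ∑ s, ∑ r,
          (g s j * g⁻¹ i r * a p r * ac s m - a s j * ac i r * g p r * g⁻¹ s m)) * X p m k := by
  funext i j k
  simp only [ObataO, PhiPlus, Pi.sub_apply, one_mul]
  simp only [Finset.mul_sum, Finset.sum_mul, mul_add, add_mul, sub_mul, mul_sub,
    Finset.sum_add_distrib, Finset.sum_sub_distrib]
  ring_nf
  rw [quad_comm (fun x x_1 x_2 x_3 => g x j * g⁻¹ i x_1 * a x_2 x_1 * ac x x_3 * X x_2 x_3 k * (1 / 4)),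
    quad_comm (fun x x_1 x_2 x_3 => a x j * ac i x_1 * g x_2 x_1 * g⁻¹ x x_3 * X x_2 x_3 k * (1 / 4))]
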